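/- Fix B ≥ 2. Define f₁(λ) = λ + e^{-λ} − λ²/2, f_{j+1}(λ) = f₁(λ) − e^{-f_j(λ)}, and p_B(λ) = e^{-λ} − λ²/2 − e^{-f_{B-1}(λ)}. Then p_B is strictly decreasing on (0, ∞) (on the domain where f_{B-1} is defined), and any root λ_B of p_B satisfies e^{-λ_B} − λ_B²/2 > 0; in particular λ_B is strictly smaller than the unique root of e^{-λ} = λ²/2. -/

import Mathlib

/-- `f₁(λ) = λ + e^{-λ} − λ²/2`. -/
noncomputable def f1 (l : ℝ) : ℝ := l + Real.exp (-l) - l ^ 2 / 2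

/-- `fseq n l` is `f_{n+1}(λ)` of the paper: `f_{j+1}(λ) = f₁(λ) − e^{-f_j(λ)}`. -/
noncomputable def fseq : ℕ → ℝ → ℝ
  | 0 => f1
  | n + 1 => fun l => f1 l - Real.exp (-(fseq n l))

lemma f1_hasDerivAt (x : ℝ) :
    HasDerivAt f1 (1 + (-Real.exp (-x)) - x) x := by
  have h1 : HasDerivAt (fun l : ℝ => Real.exp (-l)) (-Real.exp (-x)) x := by
    have := (Real.hasDerivAt_exp (-x)).comp x ((hasDerivAt_id x).neg)
    simpa [Function.comp_def] using this
  have h2 : HasDerivAt (fun l : ℝ => l ^ 2 / 2) x x := by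
    have := (hasDerivAt_pow 2 x).div_const 2
    simpa using this
  exact ((hasDerivAt_id x).add h1).sub h2

lemma f1_strictAnti : StrictAntiOn f1 (Set.Ioi (0:ℝ)) := by
  have hderiv : ∀ x ∈ interior (Set.Ioi (0:ℝ)), deriv f1 x < 0 := by
    intro x hx
    rw [interior_Ioi] at hx
    rw [(f1_hasDerivAt x).deriv]
    have hne : (-x : ℝ) ≠ 0 := by intro h; rw [Set.mem_Ioi] at hx; nlinarith [neg_eq_zero.mp h]
    have h := Real.add_one_lt_exp hne
    linarith
  exact strictAntiOn_of_deriv_neg (convex_Ioi 0)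
    (Continuous.continuousOn (by
      have : Continuous f1 := by
        unfold f1; fun_prop
      exact this))
    hderiv

lemma fseq_strictAnti (n : ℕ) : StrictAntiOn (fseq n) (Set.Ioi (0:ℝ)) := by
  induction n with
  | zero => exact f1_strictAnti
  | succ n ih =>
    intro a ha b hb hab
    have h1 := f1_strictAnti ha hb hab
    have h2 := ih ha hb hab
    have : Real.exp (-(fseq n a)) < Real.exp (-(fseq n b)) :=
      Real.exp_lt_exp.mpr (by linarith)
    simp only [fseq]
    linarith

/-- Fix `B ≥ 2` and let `p_B(λ) = e^{-λ} − λ²/2 − e^{-f_{B-1}(λ)}`. Then `p_B` is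
strictly decreasing on `(0, ∞)`, and any positive root `λ_B` of `p_B` satisfies
`e^{-λ_B} − λ_B²/2 > 0`; in particular `λ_B` is strictly smaller than the unique
root of `e^{-λ} = λ²/2`. -/
theorem pB_strictAnti_and_root_below (B : ℕ) (hB : 2 ≤ B) :
    StrictAntiOn
      (fun l : ℝ => Real.exp (-l) - l ^ 2 / 2 - Real.exp (-(fseq (B - 2) l)))
      (Set.Ioi (0:ℝ)) ∧
    ∀ lB : ℝ, 0 < lB →
      Real.exp (-lB) - lB ^ 2 / 2 - Real.exp (-(fseq (B - 2) lB)) = 0 →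
      (0 < Real.exp (-lB) - lB ^ 2 / 2 ∧
        ∀ l₁ : ℝ, 0 < l₁ → Real.exp (-l₁) = l₁ ^ 2 / 2 → lB < l₁) := by
  constructor
  · intro a ha b hb hab
    simp only [Set.mem_Ioi] at ha hb
    have h1 : Real.exp (-b) < Real.exp (-a) := Real.exp_lt_exp.mpr (by linarith)
    have h2 : a ^ 2 < b ^ 2 := by nlinarith
    have h3 := fseq_strictAnti (B - 2) ha hb hab
    have h4 : Real.exp (-(fseq (B - 2) a)) < Real.exp (-(fseq (B - 2) b)) :=
      Real.exp_lt_exp.mpr (by linarith)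
    simp only
    linarith
  · intro lB hlB hroot
    have hpos : 0 < Real.exp (-lB) - lB ^ 2 / 2 := by
      have := Real.exp_pos (-(fseq (B - 2) lB))
      linarith
    refine ⟨hpos, fun l₁ hl₁ hroot₁ => ?_⟩
    by_contra h
    push_neg at h
    rcases eq_or_lt_of_le h with heq | hlt
    · subst heq; linarith
    · have h1 : Real.exp (-lB) < Real.exp (-l₁) := Real.exp_lt_exp.mpr (by linarith)
      have h2 : l₁ ^ 2 < lB ^ 2 := by nlinarith
      linarith
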